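/- Let p be an odd prime, m = p−1, and b ∈ {0,...,p−1}. Define the m×m matrix D̃_b with (i,j) entry f_b((i·j + b) mod p) for 1 ≤ i,j ≤ m, where f_b(x) = x+1 if x < b and f_b(x) = x if x > b. Then: (i) D̃_b is a Latin square, i.e., each row and each column of D̃_b is a permutation of {1,...,m}; (ii) D̃_b is pair-balanced with t_{i,j} = 1 for all 1 ≤ i ≠ j ≤ m; (iii) any two distinct rows of D̃_b have Hamming distance exactly m. -/
import Mathlib

/-- The leave-one-out good lattice point design: entry `(i,j)` (for `1 ≤ i,j ≤ p-1`)
is `f_b((i·j + b) mod p)` where `f_b(x) = x+1` if `x < b` and `f_b(x) = x` otherwise. -/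
def Dtil (p b i j : ℕ) : ℕ :=
  let x := (i * j + b) % p
  if x < b then x + 1 else x

namespace Stmt3Aux

def fb (b x : ℕ) : ℕ := if x < b then x + 1 else x
def gb (b a : ℕ) : ℕ := if a ≤ b then a - 1 else a

lemma Dtil_eq (p b i j : ℕ) : Dtil p b i j = fb b ((i * j + b) % p) := rfl

lemma fb_inj {b x y : ℕ} (hx : x ≠ b) (hy : y ≠ b) (h : fb b x = fb b y) : x = y := by
  unfold fb at h; split_ifs at h <;> omega

lemma fb_mem {p b x : ℕ} (hb : b < p) (hx : x < p) (hxb : x ≠ b) :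
    1 ≤ fb b x ∧ fb b x ≤ p - 1 := by
  unfold fb; split_ifs <;> omega

lemma gb_spec {p b a : ℕ} (hb : b < p) (ha1 : 1 ≤ a) (ha2 : a ≤ p - 1) :
    gb b a < p ∧ gb b a ≠ b ∧ fb b (gb b a) = a := by
  unfold gb fb; split_ifs <;> omega

lemma zmod_cast_inj {p : ℕ} [NeZero p] {a c : ℕ} (ha : a < p) (hc : c < p)
    (h : (a : ZMod p) = c) : a = c := by
  have := congrArg ZMod.val h
  rwa [ZMod.val_cast_of_lt ha, ZMod.val_cast_of_lt hc] at this

lemma cast_ne_zero {p : ℕ} [NeZero p] {a : ℕ} (ha1 : 1 ≤ a) (ha : a < p) :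
    (a : ZMod p) ≠ 0 := by
  intro h
  have : a = 0 := zmod_cast_inj ha (Nat.pos_of_ne_zero (NeZero.ne p)) (by simpa using h)
  omega

lemma x_spec {p b i j : ℕ} (hp : p.Prime) (hi1 : 1 ≤ i) (hi2 : i ≤ p - 1)
    (hj1 : 1 ≤ j) (hj2 : j ≤ p - 1) :
    (i * j + b) % p < p ∧ (i * j + b) % p ≠ b ∧
      (((i * j + b) % p : ℕ) : ZMod p) = (i : ZMod p) * j + b := by
  have hp0 : 0 < p := hp.pos
  have hndvd : ¬ p ∣ i * j := by
    intro h
    rcases (Nat.Prime.dvd_mul hp).1 h with h' | h' <;>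
      exact absurd (Nat.le_of_dvd (by omega) h') (by omega)
  refine ⟨Nat.mod_lt _ hp0, ?_, ?_⟩
  · intro h
    have hdm := Nat.div_add_mod (i * j + b) p
    exact hndvd ⟨(i * j + b) / p, by omega⟩
  · rw [ZMod.natCast_mod]; push_cast; ring

end Stmt3Aux

open Stmt3Aux in
/-- for an odd prime `p`, `m = p - 1` and `b ∈ {0,…,p-1}`, the design
`D̃_b` is (i) a Latin square on `{1,…,m}` (each row and each column is a permutation
of `{1,…,m}`), (ii) pair-balanced with every `t_{a,c} = 1` (`a ≠ c`), and (iii) any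
two distinct rows have Hamming distance exactly `m`. -/
theorem stmt_3 (p : ℕ) (hp : p.Prime) (hodd : Odd p) (b : ℕ) (hb : b < p) :
    (∀ i ∈ Finset.Icc 1 (p - 1),
        Finset.image (fun j => Dtil p b i j) (Finset.Icc 1 (p - 1)) = Finset.Icc 1 (p - 1)) ∧
    (∀ j ∈ Finset.Icc 1 (p - 1),
        Finset.image (fun i => Dtil p b i j) (Finset.Icc 1 (p - 1)) = Finset.Icc 1 (p - 1)) ∧
    (∀ a ∈ Finset.Icc 1 (p - 1), ∀ c ∈ Finset.Icc 1 (p - 1), a ≠ c →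
        ((Finset.Icc 1 (p - 1) ×ˢ Finset.Icc 1 (p - 2)).filter
          (fun rk => Dtil p b rk.1 rk.2 = a ∧ Dtil p b rk.1 (rk.2 + 1) = c)).card = 1) ∧
    (∀ i ∈ Finset.Icc 1 (p - 1), ∀ i' ∈ Finset.Icc 1 (p - 1), i ≠ i' →
        ((Finset.Icc 1 (p - 1)).filter
          (fun j => Dtil p b i j ≠ Dtil p b i' j)).card = p - 1) := by
  haveI : Fact p.Prime := ⟨hp⟩
  have hp2 : 2 ≤ p := hp.two_le
  have hp3 : 3 ≤ p := by
    obtain ⟨k, hk⟩ := hodd; omega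
  -- some helper facts, stated locally
  -- (i) rows
  have rows : ∀ i ∈ Finset.Icc 1 (p - 1),
      Finset.image (fun j => Dtil p b i j) (Finset.Icc 1 (p - 1)) = Finset.Icc 1 (p - 1) := by
    intro i hi
    rw [Finset.mem_Icc] at hi
    apply Finset.eq_of_subset_of_card_le
    · intro y hy
      rw [Finset.mem_image] at hy
      obtain ⟨j, hj, hjy⟩ := hy
      rw [Finset.mem_Icc] at hj
      obtain ⟨h1, h2, _⟩ := x_spec (b := b) hp hi.1 hi.2 hj.1 hj.2
      have := fb_mem hb h1 h2
      rw [Finset.mem_Icc]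
      rw [← hjy, Dtil_eq]; exact this
    · rw [Finset.card_image_of_injOn]
      intro j hj j' hj' h
      simp only [Finset.mem_coe, Finset.mem_Icc] at hj hj'
      obtain ⟨h1, h2, h3⟩ := x_spec (b := b) hp hi.1 hi.2 hj.1 hj.2
      obtain ⟨h1', h2', h3'⟩ := x_spec (b := b) hp hi.1 hi.2 hj'.1 hj'.2
      simp only [Dtil_eq] at h
      have hx := fb_inj h2 h2' h
      have hcast : (i : ZMod p) * j + b = (i : ZMod p) * j' + b := by
        rw [← h3, ← h3', hx]
      have hij : (i : ZMod p) * j = (i : ZMod p) * j' := by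
        exact add_right_cancel hcast
      have hi0 : (i : ZMod p) ≠ 0 := cast_ne_zero hi.1 (by omega)
      have : (j : ZMod p) = j' := mul_left_cancel₀ hi0 hij
      exact zmod_cast_inj (by omega) (by omega) this
  -- (i) columns: symmetric
  have cols : ∀ j ∈ Finset.Icc 1 (p - 1),
      Finset.image (fun i => Dtil p b i j) (Finset.Icc 1 (p - 1)) = Finset.Icc 1 (p - 1) := by
    intro j hj
    rw [Finset.mem_Icc] at hj
    apply Finset.eq_of_subset_of_card_le
    · intro y hy
      rw [Finset.mem_image] at hy
      obtain ⟨i, hi, hiy⟩ := hy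
      rw [Finset.mem_Icc] at hi
      obtain ⟨h1, h2, _⟩ := x_spec (b := b) hp hi.1 hi.2 hj.1 hj.2
      have := fb_mem hb h1 h2
      rw [Finset.mem_Icc]
      rw [← hiy, Dtil_eq]; exact this
    · rw [Finset.card_image_of_injOn]
      intro i hi i' hi' h
      simp only [Finset.mem_coe, Finset.mem_Icc] at hi hi'
      obtain ⟨h1, h2, h3⟩ := x_spec (b := b) hp hi.1 hi.2 hj.1 hj.2
      obtain ⟨h1', h2', h3'⟩ := x_spec (b := b) hp hi'.1 hi'.2 hj.1 hj.2
      simp only [Dtil_eq] at h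
      have hx := fb_inj h2 h2' h
      have hcast : (i : ZMod p) * j + b = (i' : ZMod p) * j + b := by
        rw [← h3, ← h3', hx]
      have hij : (i : ZMod p) * j = (i' : ZMod p) * j := add_right_cancel hcast
      have hj0 : (j : ZMod p) ≠ 0 := cast_ne_zero hj.1 (by omega)
      have : (i : ZMod p) = i' := mul_right_cancel₀ hj0 hij
      exact zmod_cast_inj (by omega) (by omega) this
  refine ⟨rows, cols, ?_, ?_⟩
  -- (ii) pair balance
  · intro a ha c hc hac
    rw [Finset.mem_Icc] at ha hc
    obtain ⟨hAp, hAb, hAf⟩ := gb_spec (a := a) hb ha.1 ha.2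
    obtain ⟨hCp, hCb, hCf⟩ := gb_spec (a := c) hb hc.1 hc.2
    set A := gb b a with hAdef
    set C := gb b c with hCdef
    have hACne : A ≠ C := fun h => hac (by rw [← hAf, ← hCf, h])
    have hAC : ((A : ZMod p)) ≠ (C : ZMod p) := fun h => hACne (zmod_cast_inj hAp hCp h)
    set R : ZMod p := (C : ZMod p) - A with hRdef
    have hR0 : R ≠ 0 := sub_ne_zero.mpr (Ne.symm hAC)
    have hAb' : ((A : ZMod p)) - b ≠ 0 :=
      sub_ne_zero.mpr (fun h => hAb (zmod_cast_inj hAp hb h))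
    set K : ZMod p := R⁻¹ * ((A : ZMod p) - b) with hKdef
    have hK0 : K ≠ 0 := mul_ne_zero (inv_ne_zero hR0) hAb'
    have hRK : R * K = (A : ZMod p) - b := by
      rw [hKdef, ← mul_assoc, mul_inv_cancel₀ hR0, one_mul]
    have hKne : K ≠ -1 := by
      intro h
      have : (A : ZMod p) - b = -R := by rw [← hRK, h]; ring
      have hCb' : (C : ZMod p) = b := by
        rw [hRdef] at this
        have : (b : ZMod p) = C := by linear_combination -this
        exact this.symm
      exact hCb (zmod_cast_inj hCp hb hCb')
    set r₀ := R.val with hr0def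
    set k₀ := K.val with hk0def
    have hr0p : r₀ < p := R.val_lt
    have hk0p : k₀ < p := K.val_lt
    have hr01 : 1 ≤ r₀ := by
      rcases Nat.eq_zero_or_pos r₀ with h | h
      · exact absurd ((ZMod.val_eq_zero R).1 h) hR0
      · exact h
    have hk01 : 1 ≤ k₀ := by
      rcases Nat.eq_zero_or_pos k₀ with h | h
      · exact absurd ((ZMod.val_eq_zero K).1 h) hK0
      · exact h
    have hRr : ((r₀ : ℕ) : ZMod p) = R := ZMod.natCast_rightInverse R
    have hKk : ((k₀ : ℕ) : ZMod p) = K := ZMod.natCast_rightInverse K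
    have hk0ne : k₀ ≠ p - 1 := by
      intro h
      apply hKne
      rw [← hKk, h]
      have : ((p - 1 : ℕ) : ZMod p) = (p : ZMod p) - 1 := by
        push_cast [Nat.cast_sub (by omega : 1 ≤ p)]; ring
      rw [this, ZMod.natCast_self]; ring
    -- the witness works
    have hmem1 : Dtil p b r₀ k₀ = a := by
      obtain ⟨h1, h2, h3⟩ := x_spec (b := b) hp hr01 (by omega) hk01 (by omega)
      have hxA : (r₀ * k₀ + b) % p = A := by
        apply zmod_cast_inj h1 hAp
        rw [h3, hRr, hKk, hRK]; ring
      rw [Dtil_eq, hxA, hAf]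
    have hmem2 : Dtil p b r₀ (k₀ + 1) = c := by
      obtain ⟨h1, h2, h3⟩ := x_spec (b := b) hp hr01 (by omega) (by omega : 1 ≤ k₀ + 1)
        (by omega : k₀ + 1 ≤ p - 1)
      have hxC : (r₀ * (k₀ + 1) + b) % p = C := by
        apply zmod_cast_inj h1 hCp
        rw [h3]
        push_cast [hRr, hKk]
        have : R * (K + 1) = R * K + R := by ring
        rw [this, hRK, hRdef]; ring
      rw [Dtil_eq, hxC, hCf]
    rw [Finset.card_eq_one]
    refine ⟨(r₀, k₀), Finset.eq_singleton_iff_unique_mem.mpr ⟨?_, ?_⟩⟩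
    · rw [Finset.mem_filter, Finset.mem_product, Finset.mem_Icc, Finset.mem_Icc]
      exact ⟨⟨⟨hr01, by omega⟩, ⟨hk01, by omega⟩⟩, hmem1, hmem2⟩
    · rintro ⟨r, k⟩ hrk
      simp only [Finset.mem_filter, Finset.mem_product, Finset.mem_Icc] at hrk
      obtain ⟨⟨⟨hr1, hr2⟩, hk1, hk2⟩, hD1, hD2⟩ := hrk
      obtain ⟨h1, h2, h3⟩ := x_spec (b := b) hp hr1 hr2 hk1 (by omega)
      obtain ⟨h1', h2', h3'⟩ := x_spec (b := b) hp hr1 hr2 (by omega : 1 ≤ k + 1)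
        (by omega : k + 1 ≤ p - 1)
      rw [Dtil_eq] at hD1 hD2
      have hxA : (r * k + b) % p = A := fb_inj h2 hAb (by rw [hD1, hAf])
      have hxC : (r * (k + 1) + b) % p = C := fb_inj h2' hCb (by rw [hD2, hCf])
      have e1 : (r : ZMod p) * k + b = A := by rw [← h3, hxA]
      have e2 : (r : ZMod p) * k + r + b = C := by
        have h4 := h3'
        rw [hxC] at h4
        push_cast at h4
        linear_combination -h4
      have hrR : (r : ZMod p) = R := by
        rw [hRdef]; linear_combination e2 - e1
      have hr0' : (r : ZMod p) ≠ 0 := by rw [hrR]; exact hR0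
      have hkK : (k : ZMod p) = K := by
        have hrk' : (r : ZMod p) * k = (A : ZMod p) - b := by linear_combination e1
        rw [hKdef, ← hrR, ← hrk', ← mul_assoc, inv_mul_cancel₀ hr0', one_mul]
      have : r = r₀ := zmod_cast_inj (by omega) hr0p (by rw [hrR, hRr])
      have : k = k₀ := zmod_cast_inj (by omega) hk0p (by rw [hkK, hKk])
      simp_all
  -- (iii) Hamming distance
  · intro i hi i' hi' hne
    rw [Finset.mem_Icc] at hi hi'
    rw [Finset.filter_true_of_mem, Nat.card_Icc]
    · omega
    · intro j hj
      rw [Finset.mem_Icc] at hj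
      obtain ⟨h1, h2, h3⟩ := x_spec (b := b) hp hi.1 hi.2 hj.1 hj.2
      obtain ⟨h1', h2', h3'⟩ := x_spec (b := b) hp hi'.1 hi'.2 hj.1 hj.2
      intro h
      simp only [Dtil_eq] at h
      have hx := fb_inj h2 h2' h
      have hcast : (i : ZMod p) * j = (i' : ZMod p) * j := by
        have : (i : ZMod p) * j + b = (i' : ZMod p) * j + b := by rw [← h3, ← h3', hx]
        exact add_right_cancel this
      have hj0 : (j : ZMod p) ≠ 0 := cast_ne_zero hj.1 (by omega)
      have : (i : ZMod p) = i' := mul_right_cancel₀ hj0 hcast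
      exact hne (zmod_cast_inj (by omega) (by omega) this)
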